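/- In the NFA for the status field of a non-root-level QNode, every state has a directed path (possibly empty) to a state from which a 'begin new acquisition' edge originates (deadlock freedom at a non-root level). -/
import Mathlib


/-- States of the NFA for the status field of a non-root-level QNode. -/
inductive S : Type
  | R1 | R2 | R3 | W1 | W2 | W3 | W4 | W5
  | C1 | P1 | P2 | P3 | VP1 | V1 | A1
deriving DecidableEq

/-- Edges of the non-root-level status NFA; the Boolean flag marks
'begin acquisition' edges. -/
inductive E : S → S → Bool → Prop
  | a1 : E .R1 .W1 true
  | a2 : E .R1 .W2 true
  | a3 : E .A1 .W1 true
  | a4 : E .P2 .W5 true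
  | a5 : E .VP1 .W3 true
  | a6 : E .C1 .W4 true
  | e1 : E .W2 .C1 false
  | e2 : E .C1 .R1 false
  | e3 : E .C1 .P2 false
  | e4 : E .P2 .R1 false
  | e5 : E .W5 .P2 false
  | e6 : E .W5 .R3 false
  | e7 : E .W5 .R2 false
  | e8 : E .R3 .C1 false
  | e9 : E .W4 .C1 false
  | e10 : E .W1 .A1 false
  | e11 : E .A1 .VP1 false
  | e12 : E .VP1 .R1 false
  | e13 : E .VP1 .P2 false
  | e14 : E .W1 .V1 false
  | e15 : E .V1 .R1 false
  | e16 : E .V1 .P2 false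
  | e17 : E .W1 .P1 false
  | e18 : E .P1 .C1 false
  | e19 : E .W3 .P2 false
  | e20 : E .W3 .P3 false
  | e21 : E .P3 .P2 false
  | e22 : E .P3 .R3 false
  | e23 : E .P3 .R2 false
  | e24 : E .W3 .R3 false
  | e25 : E .W3 .R2 false
  | e26 : E .R2 .V1 false
  | e27 : E .R2 .P1 false
  | e28 : E .R2 .A1 false


/-- States from which a 'begin acquisition' edge originates. -/
def AcqSource (s : S) : Prop :=
  s = S.R1 ∨ s = S.A1 ∨ s = S.P2 ∨ s = S.VP1 ∨ s = S.C1

/-- Deadlock freedom at a non-root level: every state has a (possibly empty)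
directed path to a state from which a 'begin acquisition' edge originates. -/
theorem nonroot_status_deadlock_free :
    ∀ s : S, ∃ t : S,
      Relation.ReflTransGen (fun a b => ∃ f, E a b f) s t ∧ AcqSource t := by
  intro s
  cases s
  case R1 => exact ⟨.R1, .refl, Or.inl rfl⟩
  case R2 => exact ⟨.A1, .single ⟨false, .e28⟩, Or.inr (Or.inl rfl)⟩
  case R3 => exact ⟨.C1, .single ⟨false, .e8⟩, Or.inr (Or.inr (Or.inr (Or.inr rfl)))⟩
  case W1 => exact ⟨.A1, .single ⟨false, .e10⟩, Or.inr (Or.inl rfl)⟩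
  case W2 => exact ⟨.C1, .single ⟨false, .e1⟩, Or.inr (Or.inr (Or.inr (Or.inr rfl)))⟩
  case W3 => exact ⟨.P2, .single ⟨false, .e19⟩, Or.inr (Or.inr (Or.inl rfl))⟩
  case W4 => exact ⟨.C1, .single ⟨false, .e9⟩, Or.inr (Or.inr (Or.inr (Or.inr rfl)))⟩
  case W5 => exact ⟨.P2, .single ⟨false, .e5⟩, Or.inr (Or.inr (Or.inl rfl))⟩
  case C1 => exact ⟨.C1, .refl, Or.inr (Or.inr (Or.inr (Or.inr rfl)))⟩
  case P1 => exact ⟨.C1, .single ⟨false, .e18⟩, Or.inr (Or.inr (Or.inr (Or.inr rfl)))⟩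
  case P2 => exact ⟨.P2, .refl, Or.inr (Or.inr (Or.inl rfl))⟩
  case P3 => exact ⟨.P2, .single ⟨false, .e21⟩, Or.inr (Or.inr (Or.inl rfl))⟩
  case VP1 => exact ⟨.VP1, .refl, Or.inr (Or.inr (Or.inr (Or.inl rfl)))⟩
  case V1 => exact ⟨.P2, .single ⟨false, .e16⟩, Or.inr (Or.inr (Or.inl rfl))⟩
  case A1 => exact ⟨.A1, .refl, Or.inr (Or.inl rfl)⟩
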